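/- Let C₀ be a positive definite real M×M matrix, φ, y ∈ ℝᴹ, and γ > 0. Set s = φᵀC₀⁻¹φ, q = φᵀC₀⁻¹y, and C = C₀ + γ·φφᵀ. Then 1 + γs > 0, C is positive definite, and −(1/2)·log det C − (1/2)·yᵀC⁻¹y = −(1/2)·log det C₀ − (1/2)·yᵀC₀⁻¹y − (1/2)·log(1+γs) + (1/2)·γq²/(1+γs). -/

import Mathlib

open Matrix

private lemma myVecMulVec_mulVec {n : Type*} [Fintype n] (u v x : n → ℝ) :
    (vecMulVec u v) *ᵥ x = (v ⬝ᵥ x) • u := by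
  ext i
  simp [mulVec, vecMulVec_apply, dotProduct, Finset.mul_sum, mul_comm, mul_left_comm]

private lemma myVecMul_vecMulVec {n : Type*} [Fintype n] (x u v : n → ℝ) :
    x ᵥ* vecMulVec u v = (x ⬝ᵥ u) • v := by
  ext j
  simp [vecMul, vecMulVec_apply, dotProduct, Finset.sum_mul, mul_assoc]

private lemma myVecMulVec_mul {n : Type*} [Fintype n]
    (u v : n → ℝ) (N : Matrix n n ℝ) :
    vecMulVec u v * N = vecMulVec u (v ᵥ* N) := by
  ext i j
  simp [mul_apply, vecMulVec_apply, vecMul, dotProduct, Finset.mul_sum, mul_assoc]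

private lemma myVecMulVec_smul {n : Type*} (u : n → ℝ) (c : ℝ) (v : n → ℝ) :
    vecMulVec u (c • v) = c • vecMulVec u v := by
  ext i j
  simp [vecMulVec_apply]; ring

/-- The paper's decomposition `ℒ(γ) = ℒ(γ₋ᵢ) + l(γᵢ)` isolating the dependence of the
Gaussian marginal log-likelihood on a single hyper-parameter, combining the matrix
determinant lemma and the Sherman–Morrison formula. Here `s = φᵀC₀⁻¹φ`,
`q = φᵀC₀⁻¹y`, and `C = C₀ + γ·φφᵀ`. -/
theorem rank_one_loglik_decomposition (M : ℕ) (C₀ : Matrix (Fin M) (Fin M) ℝ)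
    (hC₀ : C₀.PosDef) (φ y : Fin M → ℝ) (γ : ℝ) (hγ : 0 < γ) :
    0 < 1 + γ * (φ ⬝ᵥ (C₀⁻¹ *ᵥ φ)) ∧
    (C₀ + γ • vecMulVec φ φ).PosDef ∧
    -(1/2) * Real.log (C₀ + γ • vecMulVec φ φ).det -
        (1/2) * (y ⬝ᵥ ((C₀ + γ • vecMulVec φ φ)⁻¹ *ᵥ y)) =
      -(1/2) * Real.log C₀.det - (1/2) * (y ⬝ᵥ (C₀⁻¹ *ᵥ y)) -
        (1/2) * Real.log (1 + γ * (φ ⬝ᵥ (C₀⁻¹ *ᵥ φ))) +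
        (1/2) * γ * (φ ⬝ᵥ (C₀⁻¹ *ᵥ y))^2 / (1 + γ * (φ ⬝ᵥ (C₀⁻¹ *ᵥ φ))) := by
  set s : ℝ := φ ⬝ᵥ (C₀⁻¹ *ᵥ φ) with hs
  set q : ℝ := φ ⬝ᵥ (C₀⁻¹ *ᵥ y) with hq
  have hinv : (C₀⁻¹).PosDef := hC₀.inv
  have hs0 : 0 ≤ s := by simpa using hinv.posSemidef.dotProduct_mulVec_nonneg φ
  have hd : 0 < 1 + γ * s := by positivity
  have hdne : (1 + γ * s) ≠ 0 := ne_of_gt hd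
  have hVsd : (γ • vecMulVec φ φ).PosSemidef := by
    refine posSemidef_iff_dotProduct_mulVec.mpr ⟨?_, ?_⟩
    · ext i j
      simp [vecMulVec_apply, conjTranspose_apply, mul_comm]
    · intro x
      have h1 : (γ • vecMulVec φ φ) *ᵥ x = γ • ((φ ⬝ᵥ x) • φ) := by
        rw [smul_mulVec, myVecMulVec_mulVec]
      rw [h1]
      simp only [star_trivial, dotProduct_smul, smul_eq_mul]
      have h2 : x ⬝ᵥ φ = φ ⬝ᵥ x := dotProduct_comm _ _
      rw [h2]
      nlinarith [sq_nonneg (φ ⬝ᵥ x)]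
  have hCpd : (C₀ + γ • vecMulVec φ φ).PosDef := hC₀.add_posSemidef hVsd
  refine ⟨hd, hCpd, ?_⟩
  have hAunit : IsUnit C₀.det := hC₀.isUnit.map (Matrix.detMonoidHom)
  have hAinv : C₀ * C₀⁻¹ = 1 := Matrix.mul_nonsing_inv _ hAunit
  have hAsymm : C₀⁻¹ᵀ = C₀⁻¹ := by
    have := hinv.isHermitian
    simpa [Matrix.IsHermitian, conjTranspose_eq_transpose_of_trivial] using this
  have hvm : φ ᵥ* C₀⁻¹ = C₀⁻¹ *ᵥ φ := by
    rw [← hAsymm, Matrix.vecMul_transpose, hAsymm]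
  have hvmy : y ᵥ* C₀⁻¹ = C₀⁻¹ *ᵥ y := by
    rw [← hAsymm, Matrix.vecMul_transpose, hAsymm]
  set V : Matrix (Fin M) (Fin M) ℝ := vecMulVec φ φ with hV
  set k : ℝ := γ / (1 + γ * s) with hk
  set B : Matrix (Fin M) (Fin M) ℝ := C₀⁻¹ - k • (C₀⁻¹ * V * C₀⁻¹) with hB
  have hVA : V * C₀⁻¹ = vecMulVec φ (C₀⁻¹ *ᵥ φ) := by
    rw [hV, myVecMulVec_mul, hvm]
  have hVAV : V * C₀⁻¹ * V = s • V := by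
    rw [hVA, hV, myVecMulVec_mul, myVecMul_vecMulVec, myVecMulVec_smul]
    congr 1
    rw [hs, dotProduct_comm]
  have h1 : C₀ * (C₀⁻¹ * V * C₀⁻¹) = V * C₀⁻¹ := by
    rw [← Matrix.mul_assoc, ← Matrix.mul_assoc, hAinv, Matrix.one_mul]
  have h2 : V * (C₀⁻¹ * V * C₀⁻¹) = s • (V * C₀⁻¹) := by
    rw [← Matrix.mul_assoc, ← Matrix.mul_assoc, hVAV, smul_mul_assoc]
  have hCB : (C₀ + γ • V) * B = 1 := by
    rw [hB, Matrix.add_mul, Matrix.mul_sub, Matrix.mul_sub, hAinv, mul_smul_comm,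
      smul_mul_assoc, smul_mul_assoc, mul_smul_comm, h1, h2, smul_smul, smul_smul]
    have hc : (γ:ℝ) - γ * k * s = k := by
      rw [hk]; field_simp; ring
    calc 1 - k • (V * C₀⁻¹) + (γ • (V * C₀⁻¹) - (γ * k * s) • (V * C₀⁻¹))
        = 1 - k • (V * C₀⁻¹) + ((γ - γ * k * s) • (V * C₀⁻¹)) := by
          rw [sub_smul]
      _ = 1 := by rw [hc]; abel
  have hCinv : (C₀ + γ • V)⁻¹ = B := Matrix.inv_eq_right_inv hCB
  have hyq : y ⬝ᵥ (C₀⁻¹ *ᵥ φ) = q := by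
    rw [dotProduct_mulVec, hvmy, dotProduct_comm, hq]
  have hquad : y ⬝ᵥ ((C₀ + γ • V)⁻¹ *ᵥ y) = y ⬝ᵥ (C₀⁻¹ *ᵥ y) - k * q ^ 2 := by
    rw [hCinv, hB, Matrix.sub_mulVec, dotProduct_sub, smul_mulVec]
    congr 1
    have h3 : (C₀⁻¹ * V * C₀⁻¹) *ᵥ y = q • (C₀⁻¹ *ᵥ φ) := by
      rw [Matrix.mul_assoc, ← Matrix.mulVec_mulVec, ← Matrix.mulVec_mulVec, hV,
        myVecMulVec_mulVec, ← hq, Matrix.mulVec_smul]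
    rw [h3, dotProduct_smul, smul_eq_mul, dotProduct_smul, smul_eq_mul, hyq]
    ring
  -- determinant lemma
  have hdet : (C₀ + γ • V).det = C₀.det * (1 + γ * s) := by
    have hVcr : γ • V = replicateCol Unit (γ • φ) * replicateRow Unit φ := by
      rw [hV, vecMulVec_eq Unit, replicateCol_smul, Matrix.smul_mul]
    rw [hVcr, det_add_replicateCol_mul_replicateRow hAunit]
    congr 1
    rw [det_unique]
    have hAc : C₀⁻¹ * replicateCol Unit (γ • φ) = replicateCol Unit (C₀⁻¹ *ᵥ (γ • φ)) := (replicateCol_mulVec _ _).symm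
    rw [Matrix.mul_assoc, hAc]
    simp only [Matrix.add_apply, Matrix.one_apply_eq, replicateRow_mul_replicateCol_apply]
    rw [Matrix.mulVec_smul, dotProduct_smul, smul_eq_mul, hs]
  rw [hdet, Real.log_mul (ne_of_gt hC₀.det_pos) hdne, hquad, hk]
  field_simp
  ring
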